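/- Let σ > 0, q ∈ (0,1), α > 1, z₀ = 1/2 + σ² ln(1 + 1/(q(α−1))), and suppose z₀ ≥ α. Then ∫_{z₀}^∞ μ0(z)·(qα·μ1(z)/μ0(z))^α dz ≤ (qα)^α · exp((α² − α − (z₀ − α)²)/(2σ²)), where μ0, μ1 are the densities of N(0,σ²), N(1,σ²). -/

import Mathlib

open Real MeasureTheory

noncomputable def gaussPdf (σ m x : ℝ) : ℝ :=
  (1 / (σ * Real.sqrt (2 * Real.pi))) * Real.exp (-(x - m) ^ 2 / (2 * σ ^ 2))

lemma gaussPdf_eq (σ m : ℝ) (hσ : 0 < σ) :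
    gaussPdf σ m = ProbabilityTheory.gaussianPDFReal m ⟨σ ^ 2, sq_nonneg σ⟩ := by
  ext x
  unfold gaussPdf ProbabilityTheory.gaussianPDFReal
  have h2 : Real.sqrt (2 * Real.pi * (⟨σ ^ 2, sq_nonneg σ⟩ : NNReal)) = σ * Real.sqrt (2 * Real.pi) := by
    push_cast
    rw [Real.sqrt_mul (by positivity), Real.sqrt_sq hσ.le]
    ring
  simp only [NNReal.coe_mk] at h2 ⊢
  show _ = (√(2 * π * σ ^ 2))⁻¹ * rexp (-(x - m) ^ 2 / (2 * σ ^ 2))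
  rw [h2, one_div]

lemma gaussPdf_pos (σ m x : ℝ) (hσ : 0 < σ) : 0 < gaussPdf σ m x := by
  unfold gaussPdf; positivity

lemma integrable_gaussPdf (σ m : ℝ) (hσ : 0 < σ) : Integrable (gaussPdf σ m) := by
  rw [gaussPdf_eq σ m hσ]
  exact ProbabilityTheory.integrable_gaussianPDFReal m _

lemma integral_gaussPdf (σ m : ℝ) (hσ : 0 < σ) : ∫ x, gaussPdf σ m x = 1 := by
  rw [gaussPdf_eq σ m hσ]
  exact ProbabilityTheory.integral_gaussianPDFReal_eq_one m
    (ne_of_gt ((NNReal.coe_pos (r := ⟨σ ^ 2, sq_nonneg σ⟩)).mp (by show (0:ℝ) < σ ^ 2; positivity)))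

lemma tail_le_one (σ m a : ℝ) (hσ : 0 < σ) : ∫ x in Set.Ioi a, gaussPdf σ m x ≤ 1 := by
  rw [← integral_gaussPdf σ m hσ]
  refine setIntegral_le_integral (integrable_gaussPdf σ m hσ) ?_
  filter_upwards with x using (gaussPdf_pos σ m x hσ).le

theorem tail_integral_bound (σ q α : ℝ) (hσ : 0 < σ) (hq0 : 0 < q) (hq1 : q < 1)
    (hα : 1 < α)
    (hz₀ : α ≤ (1 : ℝ) / 2 + σ ^ 2 * Real.log (1 + 1 / (q * (α - 1)))) :
    ∫ z in Set.Ioi ((1 : ℝ) / 2 + σ ^ 2 * Real.log (1 + 1 / (q * (α - 1)))),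
        gaussPdf σ 0 z * (q * α * (gaussPdf σ 1 z / gaussPdf σ 0 z)) ^ α ≤
      (q * α) ^ α *
        Real.exp ((α ^ 2 - α -
          ((1 / 2 + σ ^ 2 * Real.log (1 + 1 / (q * (α - 1)))) - α) ^ 2) / (2 * σ ^ 2)) := by
  set z₀ : ℝ := (1 : ℝ) / 2 + σ ^ 2 * Real.log (1 + 1 / (q * (α - 1))) with hz₀def
  have hσ2 : (0:ℝ) < 2 * σ ^ 2 := by positivity
  have hqα : (0:ℝ) < q * α := by positivity
  -- Step 1: pointwise identity
  have hkey : ∀ z : ℝ, gaussPdf σ 0 z * (q * α * (gaussPdf σ 1 z / gaussPdf σ 0 z)) ^ α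
      = (q * α) ^ α * Real.exp ((α ^ 2 - α) / (2 * σ ^ 2)) * gaussPdf σ α z := by
    intro z
    have hratio : gaussPdf σ 1 z / gaussPdf σ 0 z = Real.exp ((2 * z - 1) / (2 * σ ^ 2)) := by
      unfold gaussPdf
      rw [mul_div_mul_left _ _ (by positivity), ← Real.exp_sub]
      congr 1
      field_simp
      ring
    rw [hratio]
    have hbase : q * α * Real.exp ((2 * z - 1) / (2 * σ ^ 2))
        = Real.exp (Real.log (q * α) + (2 * z - 1) / (2 * σ ^ 2)) := by
      rw [Real.exp_add, Real.exp_log hqα]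
    rw [hbase, Real.rpow_def_of_pos (Real.exp_pos _), Real.log_exp,
      Real.rpow_def_of_pos hqα]
    unfold gaussPdf
    rw [mul_left_comm, mul_assoc]
    congr 1
    rw [← Real.exp_add, ← Real.exp_add, ← Real.exp_add]
    congr 1
    field_simp
    ring
  simp_rw [hkey]
  rw [integral_const_mul]
  -- Step 2: pointwise tail comparison on Ioi z₀
  have ht : 0 ≤ z₀ - α := by linarith
  have hcomp : ∀ z ∈ Set.Ioi z₀,
      gaussPdf σ α z ≤ Real.exp (-(z₀ - α) ^ 2 / (2 * σ ^ 2)) * gaussPdf σ z₀ z := by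
    intro z hz
    simp only [Set.mem_Ioi] at hz
    unfold gaussPdf
    rw [mul_left_comm, ← Real.exp_add]
    refine mul_le_mul_of_nonneg_left (Real.exp_le_exp.2 ?_) (by positivity)
    rw [← add_div, div_le_div_iff_of_pos_right hσ2]
    nlinarith [sq_nonneg (z - z₀), mul_nonneg (sub_nonneg.2 hz.le) ht]
  have hint : ∫ z in Set.Ioi z₀, gaussPdf σ α z
      ≤ Real.exp (-(z₀ - α) ^ 2 / (2 * σ ^ 2)) := by
    calc ∫ z in Set.Ioi z₀, gaussPdf σ α z
        ≤ ∫ z in Set.Ioi z₀, Real.exp (-(z₀ - α) ^ 2 / (2 * σ ^ 2)) * gaussPdf σ z₀ z := by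
          refine setIntegral_mono_on ((integrable_gaussPdf σ α hσ).integrableOn)
            (((integrable_gaussPdf σ z₀ hσ).const_mul _).integrableOn)
            measurableSet_Ioi hcomp
      _ = Real.exp (-(z₀ - α) ^ 2 / (2 * σ ^ 2)) * ∫ z in Set.Ioi z₀, gaussPdf σ z₀ z := by
          rw [integral_const_mul]
      _ ≤ Real.exp (-(z₀ - α) ^ 2 / (2 * σ ^ 2)) * 1 := by
          exact mul_le_mul_of_nonneg_left (tail_le_one σ z₀ z₀ hσ) (Real.exp_pos _).le
      _ = Real.exp (-(z₀ - α) ^ 2 / (2 * σ ^ 2)) := mul_one _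
  calc (q * α) ^ α * Real.exp ((α ^ 2 - α) / (2 * σ ^ 2)) * ∫ z in Set.Ioi z₀, gaussPdf σ α z
      ≤ (q * α) ^ α * Real.exp ((α ^ 2 - α) / (2 * σ ^ 2)) *
        Real.exp (-(z₀ - α) ^ 2 / (2 * σ ^ 2)) := by
        refine mul_le_mul_of_nonneg_left hint (by positivity)
    _ = (q * α) ^ α * Real.exp ((α ^ 2 - α - (z₀ - α) ^ 2) / (2 * σ ^ 2)) := by
        rw [mul_assoc, ← Real.exp_add]
        congr 2
        ring
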